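/- For every symmetric d-linear form A on ℝⁿ, the maximum of |A[x]^d| over the unit sphere equals the maximum of |A(x₁,…,x_d)| over all d-tuples of unit vectors: max_{‖x‖=1} |A(x,…,x)| = max_{‖x₁‖=⋯=‖x_d‖=1} |A(x₁,…,x_d)|. -/
import Mathlib

open scoped RealInnerProductSpace
open Function Finset

theorem max_abs_multilinear_eq_max_abs_on_diagonal
    {n d : ℕ} (hn : 1 ≤ n) (hd : 1 ≤ d)
    (A : ContinuousMultilinearMap ℝ
      (fun _ : Fin d => EuclideanSpace ℝ (Fin n)) ℝ)
    (hsym : ∀ (σ : Equiv.Perm (Fin d)) (x : Fin d → EuclideanSpace ℝ (Fin n)),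
      A (fun i => x (σ i)) = A x)
    (m₁ m₂ : ℝ)
    (h₁ : IsGreatest ((fun x : EuclideanSpace ℝ (Fin n) => |A fun _ => x|) ''
      {x : EuclideanSpace ℝ (Fin n) | ‖x‖ = 1}) m₁)
    (h₂ : IsGreatest ((fun x : Fin d → EuclideanSpace ℝ (Fin n) => |A x|) ''
      {x : Fin d → EuclideanSpace ℝ (Fin n) | ∀ i, ‖x i‖ = 1}) m₂) :
    m₁ = m₂ := by
  set E := EuclideanSpace ℝ (Fin n) with hE
  -- easy direction: m₁ ≤ m₂
  have hle : m₁ ≤ m₂ := by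
    obtain ⟨z, hz, hzval⟩ := h₁.1
    exact hzval ▸ h₂.2 ⟨fun _ => z, fun _ => hz, rfl⟩
  -- the maximizer set K
  set K : Set (Fin d → E) := {x | (∀ i, ‖x i‖ = 1) ∧ |A x| = m₂} with hK
  have hKne : K.Nonempty := by
    obtain ⟨x, hx, hxval⟩ := h₂.1
    exact ⟨x, hx, hxval⟩
  have hKc : IsCompact K := by
    have h1 : IsCompact {x : Fin d → E | ∀ i, ‖x i‖ = 1} := by
      have : {x : Fin d → E | ∀ i, ‖x i‖ = 1} =
          Set.univ.pi (fun _ : Fin d => Metric.sphere (0 : E) 1) := by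
        ext x; simp [Set.mem_pi, mem_sphere_zero_iff_norm]
      rw [this]
      exact isCompact_univ_pi fun _ => isCompact_sphere 0 1
    have h2 : IsClosed {x : Fin d → E | |A x| = m₂} :=
      isClosed_eq (continuous_abs.comp A.coe_continuous) continuous_const
    have hKeq : K = {x : Fin d → E | ∀ i, ‖x i‖ = 1} ∩ {x | |A x| = m₂} := rfl
    rw [hKeq]
    exact h1.inter_right h2
  -- the potential function
  set ψ : (Fin d → E) → ℝ := fun x => ‖∑ i, x i‖ ^ 2 with hψ
  have hψc : Continuous ψ := by
    have : Continuous fun x : Fin d → E => ∑ i, x i :=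
      continuous_finset_sum _ fun i _ => continuous_apply i
    exact (this.norm).pow 2
  obtain ⟨x₀, hx₀K, hmax⟩ := hKc.exists_isMaxOn hKne hψc.continuousOn
  obtain ⟨hx₀sph, hx₀val⟩ := hx₀K
  set s : E := ∑ i, x₀ i with hs
  -- sign-flip step: ⟪s, x₀ j⟫ ≥ 1 for all j
  have hin : ∀ j, 1 ≤ ⟪s, x₀ j⟫ := by
    intro j
    set y : Fin d → E := Function.update x₀ j (-x₀ j) with hy
    have hyK : y ∈ K := by
      constructor
      · intro i
        by_cases h : i = j
        · subst h; simp [hy, hx₀sph i]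
        · simp [hy, Function.update_of_ne h, hx₀sph i]
      · have hAy : A y = -A x₀ := by
          have h1 : A (Function.update x₀ j ((-1 : ℝ) • x₀ j)) =
              (-1 : ℝ) • A (Function.update x₀ j (x₀ j)) := A.map_update_smul x₀ j (-1) (x₀ j)
          simpa [hy, Function.update_eq_self] using h1
        simp only [hAy, abs_neg]
        exact hx₀val
    have hsum : ∑ i, y i = s - (2 : ℝ) • x₀ j := by
      have h1 : ∑ i, y i = -x₀ j + ∑ i ∈ univ.erase j, x₀ i := by
        rw [hy, Finset.sum_update_of_mem (Finset.mem_univ j)]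
        simp [Finset.sdiff_singleton_eq_erase]
      have h2 : s = x₀ j + ∑ i ∈ univ.erase j, x₀ i := by
        rw [hs, ← Finset.add_sum_erase _ _ (Finset.mem_univ j)]
      rw [h1, two_smul, h2]
      abel
    have hle' : ψ y ≤ ψ x₀ := hmax hyK
    have hexp : ψ y = ‖s‖^2 - 4 * ⟪s, x₀ j⟫ + 4 := by
      simp only [hψ, hsum]
      rw [norm_sub_sq_real]
      have h3 : ⟪s, (2:ℝ) • x₀ j⟫ = 2 * ⟪s, x₀ j⟫ := real_inner_smul_right s _ 2
      have h4 : ‖(2:ℝ) • x₀ j‖^2 = 4 := by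
        rw [norm_smul]
        simp [hx₀sph j]
        norm_num
      rw [h3, h4]; ring
    have hfin : ‖s‖^2 - 4 * ⟪s, x₀ j⟫ + 4 ≤ ‖s‖^2 := by
      rw [← hexp]
      simpa [hψ, ← hs] using hle'
    linarith
  have hm₂nonneg : 0 ≤ m₂ := hx₀val ▸ abs_nonneg _
  -- all coordinates of the extremal maximizer are equal
  have hall : ∀ i j, x₀ i = x₀ j := by
    intro i j
    by_contra hne
    have hij : i ≠ j := by rintro rfl; exact hne rfl
    set a : E := x₀ i + x₀ j with ha
    set b : E := x₀ i - x₀ j with hb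
    have hb0 : b ≠ 0 := sub_ne_zero.mpr hne
    have hbnorm : 0 < ‖b‖ := norm_pos_iff.mpr hb0
    have hbsq : 0 < ‖b‖^2 := by positivity
    have hipar : ‖a‖^2 + ‖b‖^2 = 4 := by
      rw [ha, hb, norm_add_sq_real, norm_sub_sq_real, hx₀sph i, hx₀sph j]; ring
    have hsa : 2 ≤ ⟪s, a⟫ := by
      have hi1 := hin i; have hj1 := hin j
      rw [ha, inner_add_right]; linarith
    have ha0 : a ≠ 0 := by
      intro h; rw [h] at hsa; simp at hsa; linarith
    have hanorm : 0 < ‖a‖ := norm_pos_iff.mpr ha0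
    have ha2pos : 0 < ‖a‖^2 := by positivity
    have hana : ‖a‖ < 2 := by
      nlinarith [hbsq, hipar, norm_nonneg a]
    set u : E := ‖a‖⁻¹ • a with hu
    set v : E := ‖b‖⁻¹ • b with hv
    have hun : ‖u‖ = 1 := by
      rw [hu, norm_smul, norm_inv, norm_norm, inv_mul_cancel₀ hanorm.ne']
    have hvn : ‖v‖ = 1 := by
      rw [hv, norm_smul, norm_inv, norm_norm, inv_mul_cancel₀ hbnorm.ne']
    -- double update
    set D : E → E → (Fin d → E) := fun p q => Function.update (Function.update x₀ i p) j q
      with hD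
    set yu : Fin d → E := D u u with hyu
    set yv : Fin d → E := D v v with hyv
    have hDsph : ∀ (w : E), ‖w‖ = 1 → ∀ k, ‖(D w w) k‖ = 1 := by
      intro w hw k
      by_cases h1 : k = j
      · subst h1; simp [hD, hw]
      · by_cases h2 : k = i
        · subst h2; simp [hD, Function.update_of_ne h1, hw]
        · simp [hD, Function.update_of_ne h1, Function.update_of_ne h2, hx₀sph k]
    have hyusph : ∀ k, ‖yu k‖ = 1 := hDsph u hun
    have hyvsph : ∀ k, ‖yv k‖ = 1 := hDsph v hvn
    -- symmetry of the two slots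
    have hswap : ∀ p q : E, A (D p q) = A (D q p) := by
      intro p q
      have h1 := hsym (Equiv.swap i j) (D q p)
      have h2 : (fun k => (D q p) (Equiv.swap i j k)) = D p q := by
        funext k
        by_cases hk : k = i
        · subst hk
          rw [Equiv.swap_apply_left]
          simp [hD, Function.update_self, Function.update_of_ne hij]
        · by_cases hk' : k = j
          · subst hk'
            rw [Equiv.swap_apply_right]
            simp [hD, Function.update_of_ne hij, Function.update_self]
          · rw [Equiv.swap_apply_of_ne_of_ne hk hk']
            simp [hD, Function.update_of_ne hk, Function.update_of_ne hk']
      rw [h2] at h1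
      exact h1
    -- update commutation
    have hcomm : ∀ p q : E, D p q = Function.update (Function.update x₀ j q) i p := by
      intro p q
      exact Function.update_comm hij p q x₀
    -- multilinearity in the two slots
    have haddj : ∀ r p q : E, A (D r (p + q)) = A (D r p) + A (D r q) := by
      intro r p q
      exact A.map_update_add (Function.update x₀ i r) j p q
    have haddi : ∀ p q r : E, A (D (p + q) r) = A (D p r) + A (D q r) := by
      intro p q r
      rw [hcomm, hcomm, hcomm]
      exact A.map_update_add (Function.update x₀ j r) i p q
    have hsmulj : ∀ r (c : ℝ) (p : E), A (D r (c • p)) = c * A (D r p) := by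
      intro r c p
      have h := A.map_update_smul (Function.update x₀ i r) j c p
      simp only [hD]
      rw [h, smul_eq_mul]
    have hsmuli : ∀ (c : ℝ) (p : E) (r : E), A (D (c • p) r) = c * A (D p r) := by
      intro c p r
      rw [hcomm, hcomm]
      have h := A.map_update_smul (Function.update x₀ j r) i c p
      rw [h, smul_eq_mul]
    have hsubj : ∀ r p q : E, A (D r (p - q)) = A (D r p) - A (D r q) := by
      intro r p q
      exact A.map_update_sub (Function.update x₀ i r) j p q
    have hsubi : ∀ p q r : E, A (D (p - q) r) = A (D p r) - A (D q r) := by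
      intro p q r
      rw [hcomm, hcomm, hcomm]
      exact A.map_update_sub (Function.update x₀ j r) i p q
    have hDx : D (x₀ i) (x₀ j) = x₀ := by
      simp [hD, Function.update_eq_self]
    -- expansion of A (D a a) and A (D b b)
    have ea : A (D a a) = A (D (x₀ i) (x₀ i)) + 2 * A x₀ + A (D (x₀ j) (x₀ j)) := by
      have e1 : A (D a a) = A (D (x₀ i) a) + A (D (x₀ j) a) := by
        conv_lhs => rw [ha]
        exact haddi _ _ _
      rw [e1, ha, haddj, haddj]
      have hsw := hswap (x₀ j) (x₀ i)
      rw [hsw, hDx]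
      ring
    have eb : A (D b b) = A (D (x₀ i) (x₀ i)) - 2 * A x₀ + A (D (x₀ j) (x₀ j)) := by
      have e1 : A (D b b) = A (D (x₀ i) b) - A (D (x₀ j) b) := by
        conv_lhs => rw [hb]
        rw [hsubi, ← hb]
      rw [e1, hb, hsubj, hsubj]
      have hsw := hswap (x₀ j) (x₀ i)
      rw [hsw, hDx]
      ring
    -- scaling
    have hua : a = ‖a‖ • u := by
      rw [hu, smul_smul, mul_inv_cancel₀ hanorm.ne', one_smul]
    have hvb : b = ‖b‖ • v := by
      rw [hv, smul_smul, mul_inv_cancel₀ hbnorm.ne', one_smul]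
    have escu : A (D a a) = ‖a‖^2 * A yu := by
      conv_lhs => rw [hua]
      rw [hsmuli, hsmulj, hyu]
      ring
    have escv : A (D b b) = ‖b‖^2 * A yv := by
      conv_lhs => rw [hvb]
      rw [hsmuli, hsmulj, hyv]
      ring
    -- the key identity
    have key : 4 * A x₀ = ‖a‖^2 * A yu - ‖b‖^2 * A yv := by
      rw [← escu, ← escv, ea, eb]; ring
    -- bounds
    have hu_le : |A yu| ≤ m₂ := h₂.2 ⟨yu, hyusph, rfl⟩
    have hv_le : |A yv| ≤ m₂ := h₂.2 ⟨yv, hyvsph, rfl⟩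
    have hchain : 4 * m₂ ≤ ‖a‖^2 * |A yu| + ‖b‖^2 * |A yv| := by
      have h0 : |4 * A x₀| = 4 * m₂ := by
        rw [abs_mul, hx₀val]; norm_num
      have habs : |‖a‖^2 * A yu - ‖b‖^2 * A yv| ≤ ‖a‖^2 * |A yu| + ‖b‖^2 * |A yv| := by
        have h := abs_sub (‖a‖^2 * A yu) (‖b‖^2 * A yv)
        rwa [abs_mul, abs_mul, abs_of_nonneg (sq_nonneg ‖a‖),
          abs_of_nonneg (sq_nonneg ‖b‖)] at h
      rw [← h0, key]
      exact habs
    have hAu : m₂ ≤ |A yu| := by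
      have h1 : ‖b‖^2 * |A yv| ≤ ‖b‖^2 * m₂ :=
        mul_le_mul_of_nonneg_left hv_le (sq_nonneg _)
      have h3 : ‖a‖^2 * m₂ + ‖b‖^2 * m₂ = 4 * m₂ := by rw [← add_mul, hipar]
      have h4 : ‖a‖^2 * m₂ ≤ ‖a‖^2 * |A yu| := by linarith
      exact le_of_mul_le_mul_left h4 ha2pos
    have hyuK : yu ∈ K := ⟨hyusph, le_antisymm hu_le hAu⟩
    -- the sum of the new maximizer
    have hyueq : yu = fun k => x₀ k +
        ((if k = i then u - x₀ i else 0) + (if k = j then u - x₀ j else 0)) := by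
      funext k
      by_cases hk : k = i
      · subst hk
        simp [hyu, hD, Function.update_of_ne hij, hij]
      · by_cases hk' : k = j
        · subst hk'
          simp [hyu, hD, Ne.symm hij, hk]
        · simp [hyu, hD, Function.update_of_ne hk, Function.update_of_ne hk', hk, hk']
    have hsumyu : ∑ k, yu k = s + (2 * ‖a‖⁻¹ - 1) • a := by
      rw [hyueq]
      rw [Finset.sum_add_distrib, Finset.sum_add_distrib]
      simp only [Finset.sum_ite_eq' Finset.univ, Finset.mem_univ, if_true]
      rw [← hs]
      have h2 : (u - x₀ i) + (u - x₀ j) = (2 * ‖a‖⁻¹ - 1) • a := by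
        rw [hu, ha]; module
      rw [h2]
    -- contradiction with ψ-maximality
    set μ : ℝ := 2 * ‖a‖⁻¹ - 1 with hμ
    have hμpos : 0 < μ := by
      have h1 : ‖a‖ * ‖a‖⁻¹ < 2 * ‖a‖⁻¹ :=
        mul_lt_mul_of_pos_right hana (inv_pos.mpr hanorm)
      rw [mul_inv_cancel₀ hanorm.ne'] at h1
      rw [hμ]
      linarith
    have hψyu : ψ yu = ‖s‖^2 + 2 * (μ * ⟪s, a⟫) + μ^2 * ‖a‖^2 := by
      simp only [hψ, hsumyu, ← hμ]
      rw [norm_add_sq_real, real_inner_smul_right, norm_smul]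
      rw [mul_pow, Real.norm_eq_abs, sq_abs]
    have hcontra : ψ yu ≤ ψ x₀ := hmax hyuK
    have hψx₀ : ψ x₀ = ‖s‖^2 := by simp [hψ, ← hs]
    rw [hψyu, hψx₀] at hcontra
    have hA1 : μ * 2 ≤ μ * ⟪s, a⟫ := mul_le_mul_of_nonneg_left hsa hμpos.le
    have hA2 : 0 < μ^2 * ‖a‖^2 := mul_pos (pow_pos hμpos 2) ha2pos
    have hA3 : 0 < μ * 2 := by positivity
    linarith
  -- conclude
  have hge : m₂ ≤ m₁ := by
    set c : E := x₀ ⟨0, hd⟩ with hc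
    have hx₀const : (fun _ : Fin d => c) = x₀ := funext fun k => (hall k ⟨0, hd⟩).symm
    refine h₁.2 ⟨c, hx₀sph _, ?_⟩
    show |A fun _ => c| = m₂
    rw [hx₀const]
    exact hx₀val
  exact le_antisymm hle hge
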